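/- For all x with 0 < x < π/2: 2·sin(x/2) + (1/3)·(2·sin(x/2) − sin(x)) < x < 2·sin(x/2) + (1/3)·(2·sin(x/2) − sin(x))·(8·sin(x/2) + sin(x))/(4·sin(x/2) + 3·sin(x)). -/

import Mathlib

open Real Set

private lemma huy_aux1 (t : ℝ) (ht0 : 0 < t) (ht1 : t < Real.pi / 2) :
    Real.sin t * (4 - Real.cos t) < 3 * t := by
  have hmono : StrictMonoOn (fun t : ℝ => 3 * t - Real.sin t * (4 - Real.cos t))
      (Set.Icc 0 (Real.pi / 2)) := by
    apply strictMonoOn_of_deriv_pos (convex_Icc _ _)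
    · fun_prop
    · intro u hu
      rw [interior_Icc] at hu
      have hD : HasDerivAt (fun t : ℝ => 3 * t - Real.sin t * (4 - Real.cos t))
          (2 * (1 - Real.cos u) ^ 2) u := by
        have h := ((hasDerivAt_id u).const_mul 3).sub
          ((Real.hasDerivAt_sin u).mul ((Real.hasDerivAt_cos u).const_sub 4))
        refine h.congr_deriv (Eq.symm ?_)
        have hp := Real.sin_sq_add_cos_sq u
        ring_nf
        nlinarith [hp]
      rw [hD.deriv]
      have hsu : 0 < Real.sin u := Real.sin_pos_of_pos_of_lt_pi hu.1
        (by linarith [Real.pi_pos, hu.2])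
      have hc1 : Real.cos u < 1 := by
        nlinarith [Real.sin_sq_add_cos_sq u, Real.neg_one_le_cos u, mul_pos hsu hsu]
      nlinarith
  have h0m : (0 : ℝ) ∈ Set.Icc 0 (Real.pi / 2) := ⟨le_refl _, by positivity⟩
  have htm : t ∈ Set.Icc 0 (Real.pi / 2) := ⟨ht0.le, ht1.le⟩
  have := hmono h0m htm ht0
  simp at this
  linarith

private lemma huy_aux2 (t : ℝ) (ht0 : 0 < t) (ht1 : t < Real.pi / 2) :
    3 * t * (2 + 3 * Real.cos t) <
      Real.sin t * (10 + 6 * Real.cos t - Real.cos t ^ 2) := by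
  have hmono : StrictMonoOn (fun t : ℝ =>
      Real.sin t * (10 + 6 * Real.cos t - Real.cos t ^ 2) - 3 * t * (2 + 3 * Real.cos t))
      (Set.Icc 0 (Real.pi / 2)) := by
    apply strictMonoOn_of_deriv_pos (convex_Icc _ _)
    · fun_prop
    · intro u hu
      rw [interior_Icc] at hu
      have hD : HasDerivAt (fun t : ℝ =>
          Real.sin t * (10 + 6 * Real.cos t - Real.cos t ^ 2) - 3 * t * (2 + 3 * Real.cos t))
          (3 * Real.sin u * (3 * u - Real.sin u * (4 - Real.cos u))) u := by
        have h := ((Real.hasDerivAt_sin u).mul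
            (((hasDerivAt_const u (10:ℝ)).add ((Real.hasDerivAt_cos u).const_mul 6)).sub
              ((Real.hasDerivAt_cos u).pow 2))).sub
          (((hasDerivAt_id u).const_mul 3).mul
            ((hasDerivAt_const u (2:ℝ)).add ((Real.hasDerivAt_cos u).const_mul 3)))
        refine h.congr_deriv (Eq.symm ?_)
        simp only [id, Pi.add_apply, Pi.sub_apply, Pi.pow_apply]
        have hp := Real.sin_sq_add_cos_sq u
        ring_nf
        linear_combination (Real.cos u - 6) * hp
      rw [hD.deriv]
      have hs : 0 < Real.sin u := Real.sin_pos_of_pos_of_lt_pi hu.1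
        (by linarith [Real.pi_pos, hu.2])
      have hf := huy_aux1 u hu.1 hu.2
      have : 0 < 3 * u - Real.sin u * (4 - Real.cos u) := by linarith
      positivity
  have h0m : (0 : ℝ) ∈ Set.Icc 0 (Real.pi / 2) := ⟨le_refl _, by positivity⟩
  have htm : t ∈ Set.Icc 0 (Real.pi / 2) := ⟨ht0.le, ht1.le⟩
  have := hmono h0m htm ht0
  simp at this
  linarith

theorem huygens_two_sided_bounds (x : ℝ) (h0 : 0 < x) (h1 : x < Real.pi / 2) :
    2 * Real.sin (x / 2) + (1 / 3) * (2 * Real.sin (x / 2) - Real.sin x) < x ∧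
    x < 2 * Real.sin (x / 2) + (1 / 3) * (2 * Real.sin (x / 2) - Real.sin x) *
      ((8 * Real.sin (x / 2) + Real.sin x) / (4 * Real.sin (x / 2) + 3 * Real.sin x)) := by
  have ht0 : 0 < x / 2 := by linarith
  have ht1 : x / 2 < Real.pi / 2 := by linarith [Real.pi_pos]
  have hsinx : Real.sin x = 2 * Real.sin (x / 2) * Real.cos (x / 2) := by
    rw [show x = 2 * (x / 2) by ring, Real.sin_two_mul]
    ring_nf
  have hs : 0 < Real.sin (x / 2) := Real.sin_pos_of_pos_of_lt_pi ht0
    (by linarith [Real.pi_pos])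
  have hc : 0 < Real.cos (x / 2) := Real.cos_pos_of_mem_Ioo
    ⟨by linarith [Real.pi_pos], by linarith⟩
  constructor
  · have h := huy_aux1 (x / 2) ht0 ht1
    nlinarith [h]
  · have hg := huy_aux2 (x / 2) ht0 ht1
    have hd : 0 < 4 * Real.sin (x / 2) + 3 * Real.sin x := by
      rw [hsinx]; nlinarith
    have h2 : Real.sin (x / 2) * (3 * (x / 2) * (2 + 3 * Real.cos (x / 2))) <
        Real.sin (x / 2) * (Real.sin (x / 2) * (10 + 6 * Real.cos (x / 2) - Real.cos (x / 2) ^ 2)) :=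
      mul_lt_mul_of_pos_left hg hs
    have key : x * (4 * Real.sin (x / 2) + 3 * Real.sin x) <
        (2 * Real.sin (x / 2)) * (4 * Real.sin (x / 2) + 3 * Real.sin x) +
        (1 / 3) * (2 * Real.sin (x / 2) - Real.sin x) * (8 * Real.sin (x / 2) + Real.sin x) := by
      rw [hsinx]
      nlinarith [h2]
    have hlt : x < ((2 * Real.sin (x / 2)) * (4 * Real.sin (x / 2) + 3 * Real.sin x) +
        (1 / 3) * (2 * Real.sin (x / 2) - Real.sin x) * (8 * Real.sin (x / 2) + Real.sin x)) /
        (4 * Real.sin (x / 2) + 3 * Real.sin x) := (lt_div_iff₀ hd).2 key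
    calc x < _ := hlt
      _ = 2 * Real.sin (x / 2) + (1 / 3) * (2 * Real.sin (x / 2) - Real.sin x) *
          ((8 * Real.sin (x / 2) + Real.sin x) / (4 * Real.sin (x / 2) + 3 * Real.sin x)) := by
        rw [mul_div_assoc', add_div' _ _ _ hd.ne']
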